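/- Every invertible n×n matrix over GF(2) can be diagonalized to the identity using at most 2n−1 operations, where each operation is either a single column addition c_i ← c_i + c_j, or a fan-out (adding a fixed column simultaneously to an arbitrary set of other columns); moreover the last operation requires no preceding single column addition. -/

import Mathlib

/-- The column-operation matrix of a fan-out with control column `c` and target set `T`. -/
def fanoutMatrix (n : ℕ) (c : Fin n) (T : Finset (Fin n)) : Matrix (Fin n) (Fin n) (ZMod 2) :=
  1 + ∑ j ∈ T, Matrix.single c j 1

/-- `E` is the column operation adding column `j` to column `i` (mod 2). -/
def IsColAdd (n : ℕ) (E : Matrix (Fin n) (Fin n) (ZMod 2)) : Prop :=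
  ∃ i j : Fin n, i ≠ j ∧ E = 1 + Matrix.single j i 1

/-- `E` is a fan-out column operation. -/
def IsFanout (n : ℕ) (E : Matrix (Fin n) (Fin n) (ZMod 2)) : Prop :=
  ∃ (c : Fin n) (T : Finset (Fin n)), c ∉ T ∧ E = fanoutMatrix n c T

lemma zmod2_cases (x : ZMod 2) : x = 0 ∨ x = 1 := by revert x; decide

lemma zmod2_add_self (x : ZMod 2) : x + x = 0 := by revert x; decide

lemma fanout_apply {n : ℕ} (c : Fin n) (T : Finset (Fin n)) (a b : Fin n) :
    fanoutMatrix n c T a b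
      = (if a = b then 1 else 0) + (if a = c ∧ b ∈ T then 1 else 0) := by
  unfold fanoutMatrix
  rw [Matrix.add_apply, Matrix.one_apply, Matrix.sum_apply]
  congr 1
  have hterm : ∀ j : Fin n, Matrix.single c j (1 : ZMod 2) a b
      = if a = c ∧ b = j then 1 else 0 := by
    intro j
    simp only [Matrix.single, Matrix.of_apply]
    exact if_congr (by constructor <;> (rintro ⟨x, y⟩; exact ⟨x.symm, y.symm⟩)) rfl rfl
  rw [Finset.sum_congr rfl (fun j _ => hterm j)]
  by_cases hac : a = c
  · simp only [hac, true_and]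
    rw [Finset.sum_ite_eq T b (fun _ => (1 : ZMod 2))]
  · simp [hac]

lemma mul_fanout_apply {n : ℕ} (M : Matrix (Fin n) (Fin n) (ZMod 2)) (c : Fin n)
    (T : Finset (Fin n)) (a b : Fin n) :
    (M * fanoutMatrix n c T) a b = M a b + (if b ∈ T then M a c else 0) := by
  rw [Matrix.mul_apply]
  have key : ∀ j : Fin n, M a j * fanoutMatrix n c T j b
      = (if j = b then M a j else 0) + (if b ∈ T then (if j = c then M a j else 0) else 0) := by
    intro j
    rw [fanout_apply]
    by_cases h1 : j = b <;> by_cases h2 : j = c <;> by_cases h3 : b ∈ T <;>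
      simp [h1, h2, h3] <;> (try split_ifs) <;> ring
  rw [Finset.sum_congr rfl (fun j _ => key j), Finset.sum_add_distrib,
    Finset.sum_ite_eq' Finset.univ b (fun j => M a j)]
  simp only [Finset.mem_univ, if_true]
  congr 1
  by_cases h3 : b ∈ T
  · simp only [h3, if_true]
    rw [Finset.sum_ite_eq' Finset.univ c (fun j => M a j)]
    simp
  · simp [h3]

lemma fanout_mul_self {n : ℕ} (c : Fin n) (T : Finset (Fin n)) (hc : c ∉ T) :
    fanoutMatrix n c T * fanoutMatrix n c T = 1 := by
  set S : Matrix (Fin n) (Fin n) (ZMod 2) := ∑ j ∈ T, Matrix.single c j 1 with hS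
  have hSS : S * S = 0 := by
    rw [hS, Finset.sum_mul]
    apply Finset.sum_eq_zero
    intro j hj
    rw [Finset.mul_sum]
    apply Finset.sum_eq_zero
    intro j' _
    apply Matrix.single_mul_single_of_ne
    intro h
    exact hc (h ▸ hj)
  have hS2 : S + S = 0 := by
    ext a b
    simp only [Matrix.add_apply, Matrix.zero_apply]
    exact zmod2_add_self _
  show (1 + S) * (1 + S) = 1
  have expand : (1 + S) * (1 + S) = 1 + (S + S) + S * S := by noncomm_ring
  rw [expand, hS2, hSS, add_zero, add_zero]

lemma isUnit_det_fanout {n : ℕ} (c : Fin n) (T : Finset (Fin n)) (hc : c ∉ T) :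
    IsUnit (fanoutMatrix n c T).det :=
  IsUnit.of_mul_eq_one _ (by rw [← Matrix.det_mul, fanout_mul_self c T hc, Matrix.det_one])

lemma fanout_singleton {n : ℕ} (c i : Fin n) :
    fanoutMatrix n c {i} = 1 + Matrix.single c i 1 := by
  unfold fanoutMatrix; rw [Finset.sum_singleton]

lemma pivot_exists {n : ℕ} (M : Matrix (Fin n) (Fin n) (ZMod 2)) (hM : IsUnit M.det)
    (i : Fin n) (hinv : ∀ j b : Fin n, (j : ℕ) < (i : ℕ) → M j b = if j = b then 1 else 0) :
    ∃ c : Fin n, (i : ℕ) ≤ (c : ℕ) ∧ M i c = 1 := by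
  by_contra hcon
  push_neg at hcon
  have h0 : ∀ c : Fin n, (i : ℕ) ≤ (c : ℕ) → M i c = 0 := by
    intro c hc
    rcases zmod2_cases (M i c) with h | h
    · exact h
    · exact absurd h (hcon c hc)
  have hdet : M.det = 0 := by
    apply Matrix.exists_vecMul_eq_zero_iff.mp
    refine ⟨fun j => (if j = i then (1 : ZMod 2) else 0)
      + (if (j : ℕ) < (i : ℕ) then M i j else 0), ?_, ?_⟩
    · intro h
      have := congrFun h i
      simp [lt_irrefl] at this
    funext b
    show ∑ j, ((if j = i then (1 : ZMod 2) else 0)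
      + (if (j : ℕ) < (i : ℕ) then M i j else 0)) * M j b = 0
    have key : ∀ j : Fin n, ((if j = i then (1 : ZMod 2) else 0)
        + (if (j : ℕ) < (i : ℕ) then M i j else 0)) * M j b
        = (if j = b then (if (b : ℕ) < (i : ℕ) then M i b else 0) else 0)
          + (if j = i then M i b else 0) := by
      intro j
      by_cases hji : j = i
      · subst hji
        have hn : ¬ ((j : ℕ) < (j : ℕ)) := lt_irrefl _
        simp only [if_pos rfl, if_neg hn, add_zero, one_mul]
        by_cases hjb : j = b
        · subst hjb
          simp [lt_irrefl]
        · simp [hjb]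
      · simp only [if_neg hji, zero_add]
        by_cases hjlt : (j : ℕ) < (i : ℕ)
        · rw [hinv j b hjlt]
          by_cases hjb : j = b
          · subst hjb
            simp [hjlt, hji]
          · simp [hjb, hji]
        · simp only [hjlt, if_false, zero_mul, if_neg hji, add_zero]
          rw [eq_comm]
          rw [ite_eq_right_iff]
          intro hjb
          subst hjb
          simp [hjlt]
    rw [Finset.sum_congr rfl (fun j _ => key j), Finset.sum_add_distrib,
      Finset.sum_ite_eq' Finset.univ b, Finset.sum_ite_eq' Finset.univ i]
    simp only [Finset.mem_univ, if_true]
    by_cases hb : (b : ℕ) < (i : ℕ)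
    · simp only [hb, if_true]; exact zmod2_add_self _
    · simp only [hb, if_false, zero_add]
      exact h0 b (le_of_not_gt hb)
  rw [hdet] at hM
  simp at hM

lemma clearRow {n : ℕ} (d : ℕ) (M1 : Matrix (Fin n) (Fin n) (ZMod 2))
    (hM1 : IsUnit M1.det) (i : Fin n) (hi : (i : ℕ) + (d + 1) = n)
    (h1a : ∀ j b : Fin n, (j : ℕ) < (i : ℕ) → M1 j b = if j = b then 1 else 0)
    (h1ii : M1 i i = 1) :
    ∃ E : Matrix (Fin n) (Fin n) (ZMod 2), IsFanout n E ∧ IsUnit (M1 * E).det ∧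
      (∀ j b : Fin n, (j : ℕ) + d < n → (M1 * E) j b = if j = b then 1 else 0) := by
  set T : Finset (Fin n) := Finset.univ.filter (fun b => b ≠ i ∧ M1 i b = 1) with hT
  have hmemT : ∀ b : Fin n, b ∈ T ↔ (b ≠ i ∧ M1 i b = 1) := by
    intro b; simp [hT]
  have hiT : i ∉ T := by simp [hT]
  refine ⟨fanoutMatrix n i T, ⟨i, T, hiT, rfl⟩, ?_, ?_⟩
  · rw [Matrix.det_mul]
    exact hM1.mul (isUnit_det_fanout i T hiT)
  · intro j b hjd
    rw [mul_fanout_apply]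
    have hji : (j : ℕ) ≤ (i : ℕ) := by omega
    rcases lt_or_eq_of_le hji with hlt | heq
    · have hMji : M1 j i = 0 := by
        rw [h1a j i hlt]
        have : j ≠ i := fun h => by subst h; exact lt_irrefl _ hlt
        simp [this]
      rw [h1a j b hlt, hMji]
      simp
    · have hjieq : j = i := Fin.ext heq
      rw [hjieq]
      by_cases hbi : b = i
      · subst hbi
        rw [if_neg hiT, h1ii, add_zero, if_pos rfl]
      · have hib : i ≠ b := fun h => hbi h.symm
        rw [if_neg hib]
        rcases zmod2_cases (M1 i b) with h | h
        · have hbT : b ∉ T := by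
            rw [hmemT]; rintro ⟨_, h1⟩; rw [h] at h1; exact one_ne_zero h1.symm
          rw [h, if_neg hbT, add_zero]
        · have hbT : b ∈ T := by rw [hmemT]; exact ⟨hbi, h⟩
          rw [h, if_pos hbT, h1ii]
          exact zmod2_add_self 1

lemma main_aux {n : ℕ} (d : ℕ) (hdn : d ≤ n) (M : Matrix (Fin n) (Fin n) (ZMod 2))
    (hM : IsUnit M.det)
    (hinv : ∀ j b : Fin n, (j : ℕ) + d < n → M j b = if j = b then 1 else 0) :
    ∃ L : List (Matrix (Fin n) (Fin n) (ZMod 2)),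
      L.length ≤ 2 * d - 1 ∧ (∀ E ∈ L, IsColAdd n E ∨ IsFanout n E) ∧ M * L.prod = 1 := by
  induction d generalizing M with
  | zero =>
    refine ⟨[], by simp, by simp, ?_⟩
    rw [List.prod_nil, mul_one]
    ext j b
    rw [hinv j b (by simpa using j.isLt), Matrix.one_apply]
  | succ d ih =>
    have hdn' : d ≤ n := by omega
    set k := n - (d + 1) with hk0
    have hk : k + (d + 1) = n := by omega
    set i : Fin n := ⟨k, by omega⟩ with hidef
    have hicoe : (i : ℕ) = k := rfl
    have hpinv : ∀ j b : Fin n, (j : ℕ) < (i : ℕ) → M j b = if j = b then 1 else 0 := by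
      intro j b hj
      rw [hicoe] at hj
      exact hinv j b (by omega)
    obtain ⟨c, hc1, hc2⟩ := pivot_exists M hM i hpinv
    rw [hicoe] at hc1
    rcases zmod2_cases (M i i) with hMii | hMii
    · -- need a column addition first
      have hci : c ≠ i := by
        intro h; rw [h, hMii] at hc2; exact one_ne_zero hc2.symm
      have hd1 : 1 ≤ d := by
        have h1 := c.isLt
        have h2 : (c : ℕ) ≠ k := fun h => hci (Fin.ext (h.trans hicoe.symm))
        omega
      set E1 := fanoutMatrix n c {i} with hE1
      have hE1colAdd : IsColAdd n E1 := ⟨i, c, fun h => hci h.symm, fanout_singleton c i⟩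
      have hciT : c ∉ ({i} : Finset (Fin n)) := by simpa using hci
      set M1 := M * E1 with hM1def
      have hM1unit : IsUnit M1.det := by
        rw [hM1def, Matrix.det_mul]
        exact hM.mul (isUnit_det_fanout c _ hciT)
      have hM1app : ∀ a b : Fin n, M1 a b = M a b + (if b = i then M a c else 0) := by
        intro a b
        rw [hM1def, hE1, mul_fanout_apply]
        simp
      have h1a : ∀ j b : Fin n, (j : ℕ) < (i : ℕ) → M1 j b = if j = b then 1 else 0 := by
        intro j b hj
        have hjk : (j : ℕ) < k := by rw [hicoe] at hj; exact hj
        have hMjc : M j c = 0 := by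
          rw [hpinv j c hj]
          have : j ≠ c := by
            intro h
            rw [← h] at hc1
            omega
          simp [this]
        rw [hM1app, hpinv j b hj, hMjc]
        simp
      have h1ii : M1 i i = 1 := by
        rw [hM1app, if_pos rfl, hMii, hc2, zero_add]
      obtain ⟨E2, hE2fan, hM2unit, hM2inv⟩ :=
        clearRow d M1 hM1unit i (by rw [hicoe]; omega) h1a h1ii
      obtain ⟨L', hL'len, hL'mem, hL'prod⟩ := ih hdn' (M1 * E2) hM2unit hM2inv
      refine ⟨E1 :: E2 :: L', ?_, ?_, ?_⟩
      · simp only [List.length_cons]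
        omega
      · intro E hE
        simp only [List.mem_cons] at hE
        rcases hE with rfl | rfl | h
        · exact Or.inl hE1colAdd
        · exact Or.inr hE2fan
        · exact hL'mem E h
      · rw [List.prod_cons, List.prod_cons, ← mul_assoc, ← mul_assoc, ← hM1def]
        exact hL'prod
    · -- pivot already 1
      obtain ⟨E2, hE2fan, hM2unit, hM2inv⟩ :=
        clearRow d M hM i (by rw [hicoe]; omega) hpinv hMii
      obtain ⟨L', hL'len, hL'mem, hL'prod⟩ := ih hdn' (M * E2) hM2unit hM2inv
      refine ⟨E2 :: L', ?_, ?_, ?_⟩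
      · simp only [List.length_cons]
        omega
      · intro E hE
        simp only [List.mem_cons] at hE
        rcases hE with rfl | h
        · exact Or.inr hE2fan
        · exact hL'mem E h
      · rw [List.prod_cons, ← mul_assoc]
        exact hL'prod

/-- any invertible matrix over GF(2) can be reduced to the identity using at
most `2n - 1` operations, each a single column addition or a fan-out. -/
theorem invertible_diagonalized_in_two_n_sub_one (n : ℕ)
    (M : Matrix (Fin n) (Fin n) (ZMod 2)) (hM : IsUnit M.det) :
    ∃ L : List (Matrix (Fin n) (Fin n) (ZMod 2)),
      L.length ≤ 2 * n - 1 ∧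
      (∀ E ∈ L, IsColAdd n E ∨ IsFanout n E) ∧
      M * L.prod = 1 := by
  exact main_aux n (le_refl n) M hM (fun j b h => absurd h (by omega))
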